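/- Let m ≥ 3. Let Φ be the set of algebra automorphisms of ℂ⟨x,y⟩ of the form x ↦ x, y ↦ y + p(x) with p a ℂ-linear combination of the powers x^{km−1} (k ≥ 1), and let Ψ be the set of automorphisms of the form x ↦ x + q(y), y ↦ y with q a ℂ-linear combination of the powers y^{km−1} (k ≥ 1). Then no nonempty alternating product of non-identity elements of Φ and Ψ equals the identity: if σ₁, σ₂, …, σ_r (r ≥ 1) are automorphisms, each σ_t lying in Φ∖{id} or Ψ∖{id}, with consecutive σ_t, σ_{t+1} never both in Φ or both in Ψ, then σ₁ ∘ σ₂ ∘ ⋯ ∘ σ_r ≠ id. Equivalently, the subgroup G_m of Aut(ℂ⟨x,y⟩) generated by Φ and Ψ is isomorphic to the free product Φ ∗ Ψ. -/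

import Mathlib

noncomputable section

namespace FreeAlgAut

/-- The free associative `ℂ`-algebra `R = ℂ⟨x,y⟩` on two generators. -/
abbrev R : Type := FreeAlgebra ℂ (Fin 2)

/-- The generator `x`. -/
def x : R := FreeAlgebra.ι ℂ 0

/-- The generator `y`. -/
def y : R := FreeAlgebra.ι ℂ 1

/-- Membership in `Φ`: endomorphisms `x ↦ x`, `y ↦ y + p(x)` with `p` a `ℂ`-linear
combination of the powers `x^{km−1}`, `k ≥ 1`. -/
def InPhi (m : ℕ) (f : R →ₐ[ℂ] R) : Prop :=
  ∃ p : R, p ∈ Submodule.span ℂ {q : R | ∃ k : ℕ, 1 ≤ k ∧ q = x ^ (k * m - 1)} ∧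
    f = FreeAlgebra.lift ℂ ![x, y + p]

/-- Membership in `Ψ`: endomorphisms `x ↦ x + q(y)`, `y ↦ y` with `q` a `ℂ`-linear
combination of the powers `y^{km−1}`, `k ≥ 1`. -/
def InPsi (m : ℕ) (f : R →ₐ[ℂ] R) : Prop :=
  ∃ q : R, q ∈ Submodule.span ℂ {r : R | ∃ k : ℕ, 1 ≤ k ∧ r = y ^ (k * m - 1)} ∧
    f = FreeAlgebra.lift ℂ ![x + q, y]

/-- evaluation at a point of ℂ² -/
def ev (a b : ℂ) : R →ₐ[ℂ] ℂ := FreeAlgebra.lift ℂ ![a, b]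

@[simp] lemma ev_x (a b : ℂ) : ev a b x = a := by
  simp [ev, x, FreeAlgebra.lift_ι_apply]

@[simp] lemma ev_y (a b : ℂ) : ev a b y = b := by
  simp [ev, y, FreeAlgebra.lift_ι_apply]

lemma comp_liftPhi (a b : ℂ) (P : Polynomial ℂ) :
    (ev a b).comp (FreeAlgebra.lift ℂ ![x, y + Polynomial.aeval x P])
      = ev a (b + Polynomial.eval a P) := by
  apply FreeAlgebra.hom_ext
  funext i
  fin_cases i <;>
    simp [ev, x, y, FreeAlgebra.lift_ι_apply, ← Polynomial.aeval_algHom_apply,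
      Polynomial.aeval_def, Polynomial.eval, - Polynomial.eval₂_id]

lemma comp_liftPsi (a b : ℂ) (P : Polynomial ℂ) :
    (ev a b).comp (FreeAlgebra.lift ℂ ![x + Polynomial.aeval y P, y])
      = ev (a + Polynomial.eval b P) b := by
  apply FreeAlgebra.hom_ext
  funext i
  fin_cases i <;>
    simp [ev, x, y, FreeAlgebra.lift_ι_apply, ← Polynomial.aeval_algHom_apply,
      Polynomial.aeval_def, Polynomial.eval, - Polynomial.eval₂_id]

lemma lift_xy_eq_id : FreeAlgebra.lift ℂ ![x, y] = AlgHom.id ℂ R := by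
  apply FreeAlgebra.hom_ext
  funext i
  fin_cases i <;> simp [x, y, FreeAlgebra.lift_ι_apply]

lemma span_extract (m : ℕ) (hm : 3 ≤ m) (g p : R)
    (hp : p ∈ Submodule.span ℂ {q : R | ∃ k : ℕ, 1 ≤ k ∧ q = g ^ (k * m - 1)}) :
    ∃ P : Polynomial ℂ, p = Polynomial.aeval g P ∧ P.coeff 0 = 0 ∧ P.coeff 1 = 0 := by
  set T : Polynomial ℂ →ₐ[ℂ] R := Polynomial.aeval g with hT
  have hsub : {q : R | ∃ k : ℕ, 1 ≤ k ∧ q = g ^ (k * m - 1)} ⊆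
      ⇑T '' {Q : Polynomial ℂ | ∃ k : ℕ, 1 ≤ k ∧ Q = Polynomial.X ^ (k * m - 1)} := by
    rintro q ⟨k, hk, rfl⟩
    exact ⟨Polynomial.X ^ (k * m - 1), ⟨k, hk, rfl⟩, by simp [hT]⟩
  have hmem : p ∈ Submodule.span ℂ
      (⇑T '' {Q : Polynomial ℂ | ∃ k : ℕ, 1 ≤ k ∧ Q = Polynomial.X ^ (k * m - 1)}) :=
    Submodule.span_mono hsub hp
  have himg : ⇑T '' {Q : Polynomial ℂ | ∃ k : ℕ, 1 ≤ k ∧ Q = Polynomial.X ^ (k * m - 1)}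
      = ⇑T.toLinearMap '' {Q : Polynomial ℂ | ∃ k : ℕ, 1 ≤ k ∧ Q = Polynomial.X ^ (k * m - 1)} := rfl
  rw [himg, Submodule.span_image, Submodule.mem_map] at hmem
  obtain ⟨P, hPmem, rfl⟩ := hmem
  have hker : Submodule.span ℂ {Q : Polynomial ℂ | ∃ k : ℕ, 1 ≤ k ∧ Q = Polynomial.X ^ (k * m - 1)}
      ≤ LinearMap.ker (Polynomial.lcoeff ℂ 0) ⊓ LinearMap.ker (Polynomial.lcoeff ℂ 1) := by
    rw [Submodule.span_le]
    rintro Q ⟨k, hk, rfl⟩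
    have hkm : m ≤ k * m := Nat.le_mul_of_pos_left m hk
    constructor <;>
      simp [LinearMap.mem_ker, Polynomial.lcoeff_apply, Polynomial.coeff_X_pow] <;> omega
  obtain ⟨h0, h1⟩ := hker hPmem
  exact ⟨P, rfl, h0, h1⟩

lemma growth (P : Polynomial ℂ) (h0 : P ≠ 0) (hc0 : P.coeff 0 = 0) (hc1 : P.coeff 1 = 0) :
    ∃ M : ℝ, ∀ c : ℂ, M ≤ ‖c‖ → 3 * ‖c‖ ≤ ‖P.eval c‖ := by
  have hd : 2 ≤ P.natDegree := by
    by_contra h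
    push_neg at h
    have h1 : P.natDegree ≤ 1 := by omega
    have := Polynomial.eq_X_add_C_of_natDegree_le_one h1
    rw [hc0, hc1] at this
    simp at this
    exact h0 this
  set d := P.natDegree with hdd
  have hlc : P.leadingCoeff ≠ 0 := Polynomial.leadingCoeff_ne_zero.mpr h0
  set c : ℝ := ‖P.leadingCoeff‖ with hc
  have hcpos : 0 < c := norm_pos_iff.mpr hlc
  set S : ℝ := ∑ i ∈ Finset.range d, ‖P.coeff i‖ with hS
  have hS0 : 0 ≤ S := Finset.sum_nonneg fun _ _ => norm_nonneg _
  refine ⟨max 1 ((S + 3) / c), fun a ha => ?_⟩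
  have ha1 : 1 ≤ ‖a‖ := le_trans (le_max_left _ _) ha
  have ha0 : 0 ≤ ‖a‖ := norm_nonneg _
  have ha2 : (S + 3) / c ≤ ‖a‖ := le_trans (le_max_right _ _) ha
  have hca : S + 3 ≤ c * ‖a‖ := by
    rw [div_le_iff₀ hcpos] at ha2
    nlinarith
  have hev : P.eval a = (∑ i ∈ Finset.range d, P.coeff i * a ^ i) + P.leadingCoeff * a ^ d := by
    rw [Polynomial.eval_eq_sum_range, Finset.sum_range_succ]
    rfl
  have hpowmono : ∀ i : ℕ, i < d → ‖a‖ ^ i ≤ ‖a‖ ^ (d - 1) := fun i hi =>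
    pow_le_pow_right₀ ha1 (by omega)
  have hbound : ‖∑ i ∈ Finset.range d, P.coeff i * a ^ i‖ ≤ S * ‖a‖ ^ (d - 1) := by
    calc ‖∑ i ∈ Finset.range d, P.coeff i * a ^ i‖
        ≤ ∑ i ∈ Finset.range d, ‖P.coeff i * a ^ i‖ := norm_sum_le _ _
      _ ≤ ∑ i ∈ Finset.range d, ‖P.coeff i‖ * ‖a‖ ^ (d - 1) := by
          apply Finset.sum_le_sum
          intro i hi
          rw [norm_mul, norm_pow]
          exact mul_le_mul_of_nonneg_left (hpowmono i (Finset.mem_range.mp hi)) (norm_nonneg _)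
      _ = S * ‖a‖ ^ (d - 1) := by rw [hS, Finset.sum_mul]
  have hlead : ‖P.leadingCoeff * a ^ d‖ = c * (‖a‖ * ‖a‖ ^ (d - 1)) := by
    rw [norm_mul, norm_pow, hc]
    congr 1
    rw [← pow_succ']
    congr 1
    omega
  have hlow : ‖P.leadingCoeff * a ^ d‖ - ‖∑ i ∈ Finset.range d, P.coeff i * a ^ i‖
      ≤ ‖P.eval a‖ := by
    rw [hev]
    have h := norm_sub_norm_le (P.leadingCoeff * a ^ d)
      (-(∑ i ∈ Finset.range d, P.coeff i * a ^ i))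
    rw [norm_neg, sub_neg_eq_add] at h
    calc ‖P.leadingCoeff * a ^ d‖ - ‖∑ i ∈ Finset.range d, P.coeff i * a ^ i‖
        ≤ ‖P.leadingCoeff * a ^ d + ∑ i ∈ Finset.range d, P.coeff i * a ^ i‖ := h
      _ = ‖∑ i ∈ Finset.range d, P.coeff i * a ^ i + P.leadingCoeff * a ^ d‖ := by rw [add_comm]
  have hpa : ‖a‖ ≤ ‖a‖ ^ (d - 1) := by
    calc ‖a‖ = ‖a‖ ^ 1 := (pow_one _).symm
      _ ≤ ‖a‖ ^ (d - 1) := pow_le_pow_right₀ ha1 (by omega)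
  have key : 3 * ‖a‖ ^ (d - 1) ≤ (c * ‖a‖ - S) * ‖a‖ ^ (d - 1) := by
    apply mul_le_mul_of_nonneg_right (by linarith) (by positivity)
  nlinarith [hlow, hbound, hlead, key, hpa, mul_le_mul_of_nonneg_left hpa (by norm_num : (0:ℝ) ≤ 3)]
/-- Let `m ≥ 3`.  No nonempty alternating composition of non-identity
elements of `Φ` and `Ψ` is the identity; equivalently, the subgroup of `Aut(ℂ⟨x,y⟩)`
generated by `Φ` and `Ψ` is the free product `Φ ∗ Ψ`.  (Composition is taken in the
endomorphism monoid of `R`, in which `f * g = f ∘ g`.) -/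
theorem statement4 (m : ℕ) (hm : 3 ≤ m) (r : ℕ) (hr : 1 ≤ r)
    (σ : Fin r → (R →ₐ[ℂ] R))
    (hσ : ∀ t : Fin r,
      (InPhi m (σ t) ∧ σ t ≠ AlgHom.id ℂ R) ∨ (InPsi m (σ t) ∧ σ t ≠ AlgHom.id ℂ R))
    (halt : ∀ (t : ℕ) (h : t + 1 < r),
      ¬(InPhi m (σ ⟨t, by omega⟩) ∧ InPhi m (σ ⟨t + 1, h⟩)) ∧
      ¬(InPsi m (σ ⟨t, by omega⟩) ∧ InPsi m (σ ⟨t + 1, h⟩))) :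
    (List.ofFn σ).prod ≠ AlgHom.id ℂ R := by
  classical
  intro heq
  have key : ∀ t : Fin r, ∃ (fl : Bool) (P : Polynomial ℂ) (M₀ : ℝ),
      (∀ c : ℂ, M₀ ≤ ‖c‖ → 3 * ‖c‖ ≤ ‖P.eval c‖) ∧
      (fl = true → InPhi m (σ t) ∧ σ t = FreeAlgebra.lift ℂ ![x, y + Polynomial.aeval x P]) ∧
      (fl = false → ¬ InPhi m (σ t) ∧ InPsi m (σ t) ∧
        σ t = FreeAlgebra.lift ℂ ![x + Polynomial.aeval y P, y]) := by
    intro t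
    have hne : σ t ≠ AlgHom.id ℂ R := by rcases hσ t with ⟨_, h⟩ | ⟨_, h⟩ <;> exact h
    by_cases hPhi : InPhi m (σ t)
    · obtain ⟨p, hspan, hform⟩ := id hPhi
      obtain ⟨P, hpP, h0, h1⟩ := span_extract m hm x p hspan
      have hPne : P ≠ 0 := by
        intro hP0
        apply hne
        rw [hform, hpP, hP0]
        simpa using lift_xy_eq_id
      obtain ⟨M₀, hM₀⟩ := growth P hPne h0 h1
      exact ⟨true, P, M₀, hM₀, fun _ => ⟨hPhi, by rw [hform, hpP]⟩, fun h => by simp at h⟩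
    · have hPsi : InPsi m (σ t) := by
        rcases hσ t with ⟨h, _⟩ | ⟨h, _⟩
        · exact absurd h hPhi
        · exact h
      obtain ⟨p, hspan, hform⟩ := id hPsi
      obtain ⟨P, hpP, h0, h1⟩ := span_extract m hm y p hspan
      have hPne : P ≠ 0 := by
        intro hP0
        apply hne
        rw [hform, hpP, hP0]
        simpa using lift_xy_eq_id
      obtain ⟨M₀, hM₀⟩ := growth P hPne h0 h1
      exact ⟨false, P, M₀, hM₀, fun h => by simp at h,
        fun _ => ⟨hPhi, hPsi, by rw [hform, hpP]⟩⟩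
  choose fl P M₀ hGood hT hF using key
  set M : ℝ := ∑ t : Fin r, max 1 (M₀ t) with hMdef
  have hsumge : ∀ t : Fin r, max 1 (M₀ t) ≤ M :=
    fun t => Finset.single_le_sum (f := fun t => max 1 (M₀ t))
      (fun s _ => le_trans zero_le_one (le_max_left _ _)) (Finset.mem_univ t)
  have hM1 : 1 ≤ M := le_trans (le_max_left 1 (M₀ ⟨0, hr⟩)) (hsumge ⟨0, hr⟩)
  have hGoodM : ∀ (t : Fin r) (c : ℂ), M ≤ ‖c‖ → 3 * ‖c‖ ≤ ‖(P t).eval c‖ :=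
    fun t c hc => hGood t c (le_trans (le_trans (le_max_right 1 (M₀ t)) (hsumge t)) hc)
  have haltB : ∀ (t : ℕ) (h1 : t + 1 < r) (h0 : t < r), fl ⟨t+1, h1⟩ = ! fl ⟨t, h0⟩ := by
    intro t h1 h0
    cases hft : fl ⟨t, h0⟩ with
    | false =>
      obtain ⟨hnPhi, hPsi, _⟩ := hF _ hft
      cases hft1 : fl ⟨t+1, h1⟩ with
      | false =>
        obtain ⟨_, hPsi1, _⟩ := hF _ hft1
        exact absurd ⟨hPsi, hPsi1⟩ (halt t h1).2
      | true => rfl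
    | true =>
      obtain ⟨hPhi, _⟩ := hT _ hft
      cases hft1 : fl ⟨t+1, h1⟩ with
      | false => rfl
      | true =>
        obtain ⟨hPhi1, _⟩ := hT _ hft1
        exact absurd ⟨hPhi, hPhi1⟩ (halt t h1).1
  have main : ∀ (k t : ℕ), t ≤ r → r - t = k → ∀ a b : ℂ,
      (∀ h : t < r, if fl ⟨t, h⟩ then (M ≤ ‖a‖ ∧ 2 * ‖b‖ ≤ ‖a‖)
        else (M ≤ ‖b‖ ∧ 2 * ‖a‖ ≤ ‖b‖)) →
      ∃ a' b' : ℂ, (ev a b).comp ((List.ofFn σ).drop t).prod = ev a' b' ∧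
        max ‖a‖ ‖b‖ ≤ max ‖a'‖ ‖b'‖ ∧
        (t < r → 2 * max ‖a‖ ‖b‖ ≤ max ‖a'‖ ‖b'‖) := by
    intro k
    induction k with
    | zero =>
      intro t ht hk a b hcond
      have htr : t = r := by omega
      subst htr
      have hnil : (List.ofFn σ).drop t = [] := by
        apply List.drop_eq_nil_of_le
        simp [ht]
      refine ⟨a, b, ?_, le_refl _, fun h => absurd h (lt_irrefl _)⟩
      rw [hnil, List.prod_nil]
      rfl
    | succ k ih =>
      intro t ht hk a b hcond
      have htr : t < r := by omega
      have hdrop : (List.ofFn σ).drop t = σ ⟨t, htr⟩ :: (List.ofFn σ).drop (t+1) := by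
        rw [List.drop_eq_getElem_cons (by simpa using htr)]
        congr 1
        simp
      rw [hdrop, List.prod_cons]
      have hcomp : (ev a b).comp (σ ⟨t, htr⟩ * ((List.ofFn σ).drop (t+1)).prod)
          = ((ev a b).comp (σ ⟨t, htr⟩)).comp (((List.ofFn σ).drop (t+1)).prod) := rfl
      rw [hcomp]
      have hcondt := hcond htr
      cases hft : fl ⟨t, htr⟩ with
      | true =>
        rw [hft, if_pos rfl] at hcondt
        obtain ⟨hMa, hba⟩ := hcondt
        obtain ⟨_, hform⟩ := hT _ hft
        rw [hform, comp_liftPhi]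
        set b' := b + Polynomial.eval a (P ⟨t, htr⟩) with hb'def
        have h3 : 3 * ‖a‖ ≤ ‖Polynomial.eval a (P ⟨t, htr⟩)‖ := hGoodM _ a hMa
        have hbb : ‖b‖ ≤ ‖a‖ := by
          have := norm_nonneg b; linarith
        have hb'2 : 2 * ‖a‖ ≤ ‖b'‖ := by
          have h4 := norm_sub_norm_le (Polynomial.eval a (P ⟨t, htr⟩)) (-b)
          rw [norm_neg, sub_neg_eq_add] at h4
          have h5 : ‖b'‖ = ‖Polynomial.eval a (P ⟨t, htr⟩) + b‖ := by rw [hb'def, add_comm]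
          rw [h5]; linarith
        have ha0 : (0:ℝ) ≤ ‖a‖ := norm_nonneg a
        have hMb' : M ≤ ‖b'‖ := by linarith
        have hcond1 : ∀ h : t + 1 < r, if fl ⟨t+1, h⟩ then (M ≤ ‖a‖ ∧ 2 * ‖b'‖ ≤ ‖a‖)
            else (M ≤ ‖b'‖ ∧ 2 * ‖a‖ ≤ ‖b'‖) := by
          intro h1
          rw [haltB t h1 htr, hft]
          simp only [Bool.not_true, Bool.false_eq_true, if_false]
          exact ⟨hMb', hb'2⟩
        obtain ⟨a', b'', heq2, hmax, _⟩ := ih (t+1) (by omega) (by omega) a b' hcond1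
        have hmaxab : max ‖a‖ ‖b‖ = ‖a‖ := max_eq_left hbb
        refine ⟨a', b'', heq2, ?_, fun _ => ?_⟩
        · rw [hmaxab]
          exact le_trans (le_max_left _ _) hmax
        · rw [hmaxab]
          calc 2 * ‖a‖ ≤ ‖b'‖ := hb'2
            _ ≤ max ‖a‖ ‖b'‖ := le_max_right _ _
            _ ≤ max ‖a'‖ ‖b''‖ := hmax
      | false =>
        rw [hft] at hcondt
        simp only [Bool.false_eq_true, if_false] at hcondt
        obtain ⟨hMb, hab⟩ := hcondt
        obtain ⟨_, _, hform⟩ := hF _ hft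
        rw [hform, comp_liftPsi]
        set a' := a + Polynomial.eval b (P ⟨t, htr⟩) with ha'def
        have h3 : 3 * ‖b‖ ≤ ‖Polynomial.eval b (P ⟨t, htr⟩)‖ := hGoodM _ b hMb
        have haa : ‖a‖ ≤ ‖b‖ := by
          have := norm_nonneg a; linarith
        have ha'2 : 2 * ‖b‖ ≤ ‖a'‖ := by
          have h4 := norm_sub_norm_le (Polynomial.eval b (P ⟨t, htr⟩)) (-a)
          rw [norm_neg, sub_neg_eq_add] at h4
          have h5 : ‖a'‖ = ‖Polynomial.eval b (P ⟨t, htr⟩) + a‖ := by rw [ha'def, add_comm]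
          rw [h5]; linarith
        have hb0 : (0:ℝ) ≤ ‖b‖ := norm_nonneg b
        have hMa' : M ≤ ‖a'‖ := by linarith
        have hcond1 : ∀ h : t + 1 < r, if fl ⟨t+1, h⟩ then (M ≤ ‖a'‖ ∧ 2 * ‖b‖ ≤ ‖a'‖)
            else (M ≤ ‖b‖ ∧ 2 * ‖a'‖ ≤ ‖b‖) := by
          intro h1
          rw [haltB t h1 htr, hft]
          simp only [Bool.not_false, if_true]
          exact ⟨hMa', ha'2⟩
        obtain ⟨a'', b'', heq2, hmax, _⟩ := ih (t+1) (by omega) (by omega) a' b hcond1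
        have hmaxab : max ‖a‖ ‖b‖ = ‖b‖ := max_eq_right haa
        refine ⟨a'', b'', heq2, ?_, fun _ => ?_⟩
        · rw [hmaxab]
          exact le_trans (le_max_right _ _) hmax
        · rw [hmaxab]
          calc 2 * ‖b‖ ≤ ‖a'‖ := ha'2
            _ ≤ max ‖a'‖ ‖b‖ := le_max_left _ _
            _ ≤ max ‖a''‖ ‖b''‖ := hmax
  have h0r : 0 < r := hr
  have hMnorm : ‖(M:ℂ)‖ = M := by
    rw [Complex.norm_real, Real.norm_eq_abs]
    exact abs_of_nonneg (by linarith)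
  obtain ⟨a0, b0, hstart, hMmax⟩ : ∃ a0 b0 : ℂ,
      (∀ h : (0:ℕ) < r, if fl ⟨0, h⟩ then (M ≤ ‖a0‖ ∧ 2 * ‖b0‖ ≤ ‖a0‖)
        else (M ≤ ‖b0‖ ∧ 2 * ‖a0‖ ≤ ‖b0‖)) ∧ M ≤ max ‖a0‖ ‖b0‖ := by
    cases hf0 : fl ⟨0, h0r⟩ with
    | true =>
      refine ⟨(M:ℂ), 0, fun h => ?_, ?_⟩
      · have hfl : fl ⟨0, h⟩ = true := hf0
        rw [hfl, if_pos rfl, hMnorm]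
        simp
        linarith
      · rw [hMnorm]
        exact le_max_left _ _
    | false =>
      refine ⟨0, (M:ℂ), fun h => ?_, ?_⟩
      · have hfl : fl ⟨0, h⟩ = false := hf0
        rw [hfl]
        simp only [Bool.false_eq_true, if_false, hMnorm]
        simp
        linarith
      · rw [hMnorm]
        exact le_max_right _ _
  obtain ⟨a', b', heqEV, _, hgrow⟩ := main r 0 (by omega) (by omega) a0 b0 hstart
  rw [List.drop_zero, heq] at heqEV
  have hev0 : ev a0 b0 = ev a' b' := by
    rw [← AlgHom.comp_id (ev a0 b0)]
    exact heqEV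
  have ha' : a0 = a' := by
    have := congrArg (fun f : R →ₐ[ℂ] ℂ => f x) hev0
    simpa using this
  have hb' : b0 = b' := by
    have := congrArg (fun f : R →ₐ[ℂ] ℂ => f y) hev0
    simpa using this
  have hg := hgrow h0r
  rw [← ha', ← hb'] at hg
  linarith

end FreeAlgAut
end
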